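/- Let n,k ≥ 2 be integers and let G be a vertex-minimal graph with no odd cycles of length at most 2k-1 and chromatic number greater than n. Then for every vertex v of G, the ball of radius k-1 around v satisfies |U_{k-1}(v,G)| ≥ n(k-1)+1. -/

import Mathlib

open SimpleGraph Walk

/-- `G` contains no odd cycle of length at most `2k-1`. -/
def NoShortOddCycles {V : Type} (G : SimpleGraph V) (k : ℕ) : Prop :=
  ∀ (v : V) (w : G.Walk v v), w.IsCycle → Odd w.length → 2 * k - 1 < w.length

/-- The ball of radius `r` around `v` in `G`. -/
noncomputable def ball {V : Type} [Fintype V] (G : SimpleGraph V) (v : V) (r : ℕ) : Finset V :=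
  Finset.univ.filter (fun u => G.dist v u ≤ r)

open SimpleGraph Walk

lemma odd_cycle_aux {V : Type} {G : SimpleGraph V} :
    ∀ (N : ℕ) (u : V) (w : G.Walk u u), w.length ≤ N → Odd w.length →
      ∃ (x : V) (c : G.Walk x x), c.IsCycle ∧ Odd c.length ∧ c.length ≤ w.length := by
  classical
  intro N
  induction N using Nat.strong_induction_on with
  | _ N ih =>
  intro u w hle hodd
  by_cases hnd : w.support.tail.Nodup
  · cases w with
    | nil => simp [Nat.odd_iff] at hodd
    | @cons _ y _ hadj r =>
      have hrnd : r.support.Nodup := by simpa using hnd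
      have hrpath : r.IsPath := Walk.IsPath.mk' hrnd
      by_cases hedge : s(u, y) ∈ r.edges
      · exfalso
        have hrr : r.reverse.IsPath := hrpath.reverse
        have hedge' : s(u, y) ∈ r.reverse.edges := by
          rw [Walk.edges_reverse, List.mem_reverse]; exact hedge
        have hnn : ¬ r.reverse.Nil := by
          intro h
          have h0 : r.reverse.length = 0 := Walk.nil_iff_length_eq.mp h
          exact hadj.ne (Walk.eq_of_length_eq_zero h0)
        obtain ⟨z, h', r', hq⟩ := Walk.not_nil_iff.mp hnn
        rw [hq] at hedge' hrr
        rw [Walk.cons_isPath_iff] at hrr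
        simp only [Walk.edges_cons, List.mem_cons] at hedge'
        rcases hedge' with h1 | h1
        · have hz : z = y := (Sym2.congr_right.mp h1.symm)
          subst hz
          have : r' = Walk.nil := (Walk.isPath_iff_eq_nil (p := r')).mp hrr.1
          have hlen1 : r.length = 1 := by
            have := congrArg Walk.length hq
            rw [Walk.length_reverse] at this
            simp [this, Walk.length_cons, ‹r' = Walk.nil›]
          simp [Walk.length_cons, hlen1, Nat.odd_iff] at hodd
        · exact hrr.2 (Walk.fst_mem_support_of_mem_edges r' h1)
      · exact ⟨u, Walk.cons hadj r, (Walk.cons_isCycle_iff r hadj).mpr ⟨hrpath, hedge⟩,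
          hodd, le_rfl⟩
  · obtain ⟨x, hdup⟩ := List.exists_duplicate_iff_not_nodup.mpr hnd
    have hcount : 2 ≤ w.support.tail.count x := List.duplicate_iff_two_le_count.mp hdup
    have hxmem : x ∈ w.support := List.mem_of_mem_tail hdup.mem
    set q := w.rotate x hxmem with hqdef
    have hlenq : q.length = w.length := by
      have := (Walk.rotate_darts w x hxmem).perm.length_eq
      rw [← Walk.length_darts, ← Walk.length_darts]; exact this
    have hqcount : 2 ≤ q.support.tail.count x := by
      have h2 := ((Walk.support_rotate w x hxmem).perm.count_eq x)
      rw [← hqdef] at h2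
      omega
    have hqnn : ¬ q.Nil := by
      rw [Walk.nil_iff_length_eq, hlenq]
      rintro h0
      simp [h0, Nat.odd_iff] at hodd
    obtain ⟨z, h', r', hq⟩ := Walk.not_nil_iff.mp hqnn
    have hrcount : 2 ≤ r'.support.count x := by
      have h3 : q.support.tail = r'.support := by rw [hq]; simp
      rw [h3] at hqcount; exact hqcount
    have hxr : x ∈ r'.support := Walk.end_mem_support r'
    set t := r'.takeUntil x hxr with htdef
    set d := r'.dropUntil x hxr with hddef
    have hspec : t.append d = r' := r'.take_spec hxr
    have hsupp : r'.support = t.support ++ d.support.tail := by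
      rw [← hspec, Walk.support_append]
    have hct : t.support.count x = 1 := Walk.count_support_takeUntil_eq_one r' hxr
    have hd1 : 1 ≤ d.support.tail.count x := by
      rw [hsupp, List.count_append] at hrcount; omega
    have hdlen : 1 ≤ d.length := by
      by_contra h
      have h0 : d.length = 0 := by omega
      have : d = Walk.nil := Walk.nil_iff_eq_nil.mp (Walk.length_eq_zero_iff.mp h0)
      rw [this] at hd1; simp at hd1
    have hlens : t.length + d.length = r'.length := by
      have := congrArg Walk.length hspec
      simpa [Walk.length_append] using this
    have hqlen : q.length = r'.length + 1 := by
      rw [hq]; simp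
    have htotal : (Walk.cons h' t).length + d.length = w.length := by
      simp only [Walk.length_cons]; omega
    have hwpos : 1 ≤ w.length := hodd.pos
    rcases Nat.even_or_odd (Walk.cons h' t).length with hp | hp
    · -- d is odd
      have hdo : Odd d.length := by
        rw [Nat.odd_iff] at hodd ⊢; rw [Nat.even_iff] at hp; omega
      have hdlt : d.length < w.length := by
        have : 1 ≤ (Walk.cons h' t).length := by simp
        omega
      obtain ⟨x', c, hc, hco, hcl⟩ := ih d.length (by omega) x d le_rfl hdo
      exact ⟨x', c, hc, hco, by omega⟩
    · have hclt : (Walk.cons h' t).length < w.length := by omega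
      obtain ⟨x', c, hc, hco, hcl⟩ := ih _ (by omega) x (Walk.cons h' t) le_rfl hp
      exact ⟨x', c, hc, hco, by omega⟩

lemma noShortOddCycles_induce {V : Type} {G : SimpleGraph V} {k : ℕ}
    (hG : NoShortOddCycles G k) (s : Set V) :
    NoShortOddCycles (G.induce s) k := by
  intro v w hc ho
  have hinj : Function.Injective (SimpleGraph.Embedding.induce (G := G) s).toHom :=
    Subtype.val_injective
  have := hG v.1 (w.map (SimpleGraph.Embedding.induce (G := G) s).toHom) (hc.map hinj)
    (Eq.mpr (congrArg Odd (Walk.length_map _ w)) ho)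
  exact lt_of_lt_of_eq this (Walk.length_map _ w)

lemma reachable_all {V : Type} [Fintype V] {G : SimpleGraph V} {n k : ℕ}
    (hchr : ¬ G.Colorable n)
    (hmin : ∀ (W : Type) (_ : Fintype W) (H : SimpleGraph W),
      NoShortOddCycles H k → Fintype.card W < Fintype.card V → H.Colorable n)
    (hG : NoShortOddCycles G k) (v : V) : ∀ u, G.Reachable v u := by
  classical
  by_contra h
  push_neg at h
  obtain ⟨u0, hu0⟩ := h
  set s : Set V := {x | G.Reachable v x} with hs
  haveI : DecidablePred (· ∈ s) := fun x => Classical.dec _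
  have hvs : v ∈ s := Reachable.refl v
  have h1 := hmin _ inferInstance (G.induce s) (noShortOddCycles_induce hG s)
    (Fintype.card_subtype_lt (x := u0) hu0)
  have h2 := hmin _ inferInstance (G.induce sᶜ) (noShortOddCycles_induce hG sᶜ)
    (Fintype.card_subtype_lt (x := v) (by simpa using hvs))
  obtain ⟨C1⟩ := h1
  obtain ⟨C2⟩ := h2
  apply hchr
  refine ⟨SimpleGraph.Coloring.mk
    (fun x => if h : x ∈ s then C1 ⟨x, h⟩ else C2 ⟨x, h⟩) ?_⟩
  intro a b hab
  by_cases ha : a ∈ s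
  · have hb : b ∈ s := ha.trans hab.reachable
    simp only [ha, hb, dif_pos]
    exact C1.valid (by simpa using hab)
  · have hb : b ∉ s := fun hb => ha (hb.trans hab.symm.reachable)
    simp only [ha, hb, dif_neg, not_false_iff]
    exact C2.valid (by simpa using hab)

lemma sphere_large {V : Type} [Fintype V] {G : SimpleGraph V} {n k : ℕ}
    (hn : 2 ≤ n) (hk : 2 ≤ k) (hG : NoShortOddCycles G k) (hchr : ¬ G.Colorable n)
    (hmin : ∀ (W : Type) (_ : Fintype W) (H : SimpleGraph W),
      NoShortOddCycles H k → Fintype.card W < Fintype.card V → H.Colorable n)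
    (v : V) (hreach : ∀ u, G.Reachable v u)
    (i : ℕ) (hi1 : 1 ≤ i) (hik : i ≤ k - 1) :
    n ≤ (Finset.univ.filter (fun u => G.dist v u = i)).card := by
  classical
  have hstep : ∀ x y : V, G.Adj x y → G.dist v y ≤ G.dist v x + 1 := by
    intro x y hxy
    obtain ⟨p, hp⟩ := (hreach x).exists_walk_length_eq_dist
    have h := SimpleGraph.dist_le (p.concat hxy)
    rwa [Walk.length_concat, hp] at h
  have hnosame : ∀ x y : V, G.Adj x y → G.dist v x = G.dist v y →
      G.dist v x ≤ k - 2 → False := by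
    intro x y hxy heq hle
    obtain ⟨p1, hp1⟩ := (hreach x).exists_walk_length_eq_dist
    obtain ⟨p2, hp2⟩ := (hreach y).exists_walk_length_eq_dist
    set cw : G.Walk v v := (p1.concat hxy).append p2.reverse with hcw
    have hcwl : cw.length = 2 * G.dist v x + 1 := by
      rw [hcw, Walk.length_append, Walk.length_concat, Walk.length_reverse, hp1, hp2]
      omega
    have hcwo : Odd cw.length := by rw [hcwl]; exact odd_two_mul_add_one _
    obtain ⟨x', c, hc, hco, hcl⟩ := odd_cycle_aux cw.length v cw le_rfl hcwo
    have := hG x' c hc hco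
    omega
  by_contra hcard
  push_neg at hcard
  set s : Set V := {x | i ≤ G.dist v x} with hs
  haveI : DecidablePred (· ∈ s) := fun x => Nat.decLe _ _
  have hvs : v ∉ s := by simp [hs, SimpleGraph.dist_self]; omega
  have hcol := hmin _ inferInstance (G.induce s) (noShortOddCycles_induce hG s)
    (Fintype.card_subtype_lt (x := v) hvs)
  obtain ⟨C⟩ := hcol
  set T : Finset (Fin n) :=
    (Finset.univ.filter (fun u : s => G.dist v u.1 = i)).image (fun u => C u) with hT
  have hTcard : T.card < n := by
    calc T.card ≤ (Finset.univ.filter (fun u : s => G.dist v u.1 = i)).card :=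
          Finset.card_image_le
      _ ≤ (Finset.univ.filter (fun u : V => G.dist v u = i)).card := by
          apply Finset.card_le_card_of_injOn (fun u => u.1)
          · intro u hu
            simp only [Finset.mem_coe, Finset.mem_filter, Finset.mem_univ, true_and] at hu ⊢
            exact hu
          · exact fun a _ b _ h => Subtype.ext h
      _ < n := hcard
  have hTne : ∃ c0 : Fin n, c0 ∉ T := by
    by_contra h
    push_neg at h
    have : T = Finset.univ := Finset.eq_univ_iff_forall.mpr h
    rw [this, Finset.card_univ, Fintype.card_fin] at hTcard
    omega
  obtain ⟨c0, hc0⟩ := hTne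
  obtain ⟨c1, hc1⟩ := Fintype.exists_ne_of_one_lt_card
    (by simp [Fintype.card_fin]; omega : 1 < Fintype.card (Fin n)) c0
  apply hchr
  refine ⟨SimpleGraph.Coloring.mk
    (fun x => if h : x ∈ s then C ⟨x, h⟩
      else if G.dist v x % 2 = (i - 1) % 2 then c0 else c1) ?_⟩
  intro x y hxy
  have hdxy := hstep x y hxy
  have hdyx := hstep y x hxy.symm
  have hmemT : ∀ (x : V) (h : x ∈ s), G.dist v x = i → C ⟨x, h⟩ ∈ T := by
    intro x h hd
    exact Finset.mem_image.mpr ⟨⟨x, h⟩, by simp [hd], rfl⟩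
  by_cases hx : x ∈ s <;> by_cases hy : y ∈ s
  · simp only [hx, hy, dif_pos]
    exact C.valid (by simpa using hxy)
  · -- x ∈ s, y ∉ s : dist x = i, dist y = i - 1
    have hyd : G.dist v y ≤ i - 1 := by
      simp only [hs, Set.mem_setOf_eq, not_le] at hy; omega
    have hxd : G.dist v x = i := by
      have hx' : i ≤ G.dist v x := hx
      omega
    have hyd' : G.dist v y = i - 1 := by omega
    simp only [hx, hy, dif_pos, dif_neg, not_false_iff, hyd']
    rw [if_pos trivial]
    intro h
    apply hc0; rw [← h]; exact hmemT x hx hxd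
  · have hxd : G.dist v x ≤ i - 1 := by
      simp only [hs, Set.mem_setOf_eq, not_le] at hx; omega
    have hyd : G.dist v y = i := by
      have hy' : i ≤ G.dist v y := hy
      omega
    have hxd' : G.dist v x = i - 1 := by omega
    simp only [hx, hy, dif_pos, dif_neg, not_false_iff, hxd']
    rw [if_pos trivial]
    intro h
    apply hc0; rw [h]; exact hmemT y hy hyd
  · -- both < i
    have hxd : G.dist v x ≤ i - 1 := by
      simp only [hs, Set.mem_setOf_eq, not_le] at hx; omega
    have hyd : G.dist v y ≤ i - 1 := by
      simp only [hs, Set.mem_setOf_eq, not_le] at hy; omega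
    have hne : G.dist v x ≠ G.dist v y := by
      intro heq
      exact hnosame x y hxy heq (by omega)
    simp only [hx, hy, dif_neg, not_false_iff]
    split_ifs with h1 h2 h2
    · omega
    · exact fun h => hc1 h.symm
    · exact fun h => hc1 h
    · omega

theorem stmt_5 {V : Type} [Fintype V] (G : SimpleGraph V) (n k : ℕ)
    (hn : 2 ≤ n) (hk : 2 ≤ k)
    (hG : NoShortOddCycles G k) (hchr : ¬ G.Colorable n)
    (hmin : ∀ (W : Type) (_ : Fintype W) (H : SimpleGraph W),
      NoShortOddCycles H k → Fintype.card W < Fintype.card V → H.Colorable n)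
    (v : V) :
    n * (k - 1) + 1 ≤ (_root_.ball G v (k - 1)).card := by
  classical
  have hreach := reachable_all hchr hmin hG v
  have hsph : ∀ i, 1 ≤ i → i ≤ k - 1 →
      n ≤ (Finset.univ.filter (fun u => G.dist v u = i)).card :=
    fun i h1 h2 => sphere_large hn hk hG hchr hmin v hreach i h1 h2
  obtain ⟨m, rfl⟩ : ∃ m, k = m + 2 := ⟨k - 2, by omega⟩
  set f : ℕ → Finset V := fun i => Finset.univ.filter (fun u => G.dist v u = i) with hf
  have hdisj : ∀ i ∈ Finset.range (m+2), ∀ j ∈ Finset.range (m+2), i ≠ j →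
      Disjoint (f i) (f j) := by
    intro i _ j _ hij
    rw [Finset.disjoint_left]
    intro a ha hb
    simp only [hf, Finset.mem_filter] at ha hb
    omega
  have hsub : (Finset.range (m+2)).biUnion f ⊆ ball G v (m+2-1) := by
    intro a ha
    simp only [Finset.mem_biUnion, Finset.mem_range, hf, Finset.mem_filter,
      Finset.mem_univ, true_and] at ha
    obtain ⟨i, hi, hd⟩ := ha
    simp only [_root_.ball, Finset.mem_filter, Finset.mem_univ, true_and]
    omega
  have h1 : ((Finset.range (m+2)).biUnion f).card ≤ (_root_.ball G v (m+2-1)).card :=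
    Finset.card_le_card hsub
  rw [Finset.card_biUnion hdisj] at h1
  have h0 : 1 ≤ (f 0).card :=
    Finset.card_pos.mpr ⟨v, by simp [hf, SimpleGraph.dist_self]⟩
  have hsum : ∑ i ∈ Finset.range (m+2), (f i).card
      = (∑ i ∈ Finset.range (m+1), (f (i+1)).card) + (f 0).card :=
    Finset.sum_range_succ' _ _
  have hge : ∀ i ∈ Finset.range (m+1), n ≤ (f (i+1)).card := fun i hi =>
    hsph (i+1) (by omega) (by simp only [Finset.mem_range] at hi; omega)
  have h2 := Finset.card_nsmul_le_sum (Finset.range (m+1)) _ n hge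
  simp only [Finset.card_range, smul_eq_mul] at h2
  have h3 : n * (m + 2 - 1) + 1 ≤ ∑ i ∈ Finset.range (m+2), (f i).card := by
    rw [hsum]
    have : n * (m + 2 - 1) = (m + 1) * n := by
      rw [show m + 2 - 1 = m + 1 from rfl, Nat.mul_comm]
    omega
  exact h3.trans h1
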